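/- Let m ≥ a + b be positive integers. If A ⊆ C([m],a) and B ⊆ C([m],b) are cross-intersecting families, then |A|/C(m,a) + |B|/C(m,b) ≤ 1. -/

import Mathlib

/-- Normalized bound for cross-intersecting families (Lemma 2.4). -/
theorem stmt7 (m a b : ℕ) (ha : 0 < a) (hb : 0 < b) (hm : a + b ≤ m)
    (A B : Finset (Finset ℕ))
    (hA : A ⊆ (Finset.Icc 1 m).powersetCard a)
    (hB : B ⊆ (Finset.Icc 1 m).powersetCard b)
    (hcross : ∀ S ∈ A, ∀ T ∈ B, (S ∩ T).Nonempty) :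
    (A.card : ℝ) / (m.choose a) + (B.card : ℝ) / (m.choose b) ≤ 1 := by
  set U := Finset.Icc 1 m with hUdef
  have hUcard : U.card = m := by simp [hUdef]
  -- the big set of pairs
  set Ω : Finset ((_ : Finset ℕ) × Finset ℕ) :=
    (U.powersetCard a).sigma (fun S => (U \ S).powersetCard b) with hΩ
  set ΩA : Finset ((_ : Finset ℕ) × Finset ℕ) :=
    A.sigma (fun S => (U \ S).powersetCard b) with hΩA
  set ΩB : Finset ((_ : Finset ℕ) × Finset ℕ) :=
    B.sigma (fun T => (U \ T).powersetCard a) with hΩB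
  have hsub : ∀ {𝒜 : Finset (Finset ℕ)} {r : ℕ}, 𝒜 ⊆ U.powersetCard r →
      ∀ S ∈ 𝒜, S ⊆ U ∧ S.card = r := by
    intro 𝒜 r h𝒜 S hS
    have := h𝒜 hS
    rw [Finset.mem_powersetCard] at this
    exact this
  have cardΩA : ΩA.card = A.card * ((m - a).choose b) := by
    rw [hΩA, Finset.card_sigma]
    rw [Finset.sum_congr rfl (fun S hS => ?_), Finset.sum_const, smul_eq_mul]
    obtain ⟨h1, h2⟩ := hsub hA S hS
    rw [Finset.card_powersetCard, Finset.card_sdiff_of_subset h1, hUcard, h2]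
  have cardΩB : ΩB.card = B.card * ((m - b).choose a) := by
    rw [hΩB, Finset.card_sigma]
    rw [Finset.sum_congr rfl (fun T hT => ?_), Finset.sum_const, smul_eq_mul]
    obtain ⟨h1, h2⟩ := hsub hB T hT
    rw [Finset.card_powersetCard, Finset.card_sdiff_of_subset h1, hUcard, h2]
  have cardΩ : Ω.card = m.choose a * ((m - a).choose b) := by
    rw [hΩ, Finset.card_sigma]
    rw [Finset.sum_congr rfl (fun S hS => ?_), Finset.sum_const, smul_eq_mul,
      Finset.card_powersetCard, hUcard]
    obtain ⟨h1, h2⟩ := hsub (Finset.Subset.refl _) S hS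
    rw [Finset.card_powersetCard, Finset.card_sdiff_of_subset h1, hUcard, h2]
  -- the swap map
  set g : ((_ : Finset ℕ) × Finset ℕ) → ((_ : Finset ℕ) × Finset ℕ) :=
    fun p => ⟨p.2, p.1⟩ with hg
  have hginj : Function.Injective g := by
    intro p q h
    simp only [hg, Sigma.mk.inj_iff, heq_eq_eq] at h
    exact Sigma.ext h.2 (heq_of_eq h.1)
  have himg_sub : ΩB.image g ⊆ Ω := by
    intro p hp
    rw [Finset.mem_image] at hp
    obtain ⟨q, hq, rfl⟩ := hp
    rw [hΩB, Finset.mem_sigma] at hq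
    obtain ⟨hT, hS⟩ := hq
    rw [Finset.mem_powersetCard] at hS
    obtain ⟨hT1, hT2⟩ := hsub hB _ hT
    rw [hΩ, Finset.mem_sigma, Finset.mem_powersetCard, Finset.mem_powersetCard]
    refine ⟨⟨hS.1.trans (Finset.sdiff_subset), hS.2⟩, ?_, hT2⟩
    intro x hx
    rw [Finset.mem_sdiff]
    refine ⟨hT1 hx, fun hxS => ?_⟩
    have := hS.1 hxS
    rw [Finset.mem_sdiff] at this
    exact this.2 hx
  have hA_sub : ΩA ⊆ Ω := by
    rw [hΩA, hΩ]
    exact Finset.sigma_mono hA (fun _ => Finset.Subset.refl _)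
  have hdisj : Disjoint ΩA (ΩB.image g) := by
    rw [Finset.disjoint_left]
    intro p hp hp'
    rw [hΩA, Finset.mem_sigma, Finset.mem_powersetCard] at hp
    rw [Finset.mem_image] at hp'
    obtain ⟨q, hq, hgq⟩ := hp'
    rw [hΩB, Finset.mem_sigma] at hq
    have hq1 : q.1 = p.2 := by rw [← hgq]
    have hSA : p.1 ∈ A := hp.1
    have hTB : p.2 ∈ B := hq1 ▸ hq.1
    obtain ⟨x, hx⟩ := hcross _ hSA _ hTB
    rw [Finset.mem_inter] at hx
    have := hp.2.1 hx.2
    rw [Finset.mem_sdiff] at this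
    exact this.2 hx.1
  -- the counting inequality
  have key : A.card * ((m - a).choose b) + B.card * ((m - b).choose a)
      ≤ m.choose a * ((m - a).choose b) := by
    calc A.card * ((m - a).choose b) + B.card * ((m - b).choose a)
        = ΩA.card + (ΩB.image g).card := by
          rw [Finset.card_image_of_injective _ hginj, cardΩA, cardΩB]
      _ = (ΩA ∪ ΩB.image g).card := (Finset.card_union_of_disjoint hdisj).symm
      _ ≤ Ω.card := Finset.card_le_card (Finset.union_subset hA_sub himg_sub)
      _ = _ := cardΩ
  -- binomial identity
  have hident : m.choose a * ((m - a).choose b) = m.choose b * ((m - b).choose a) := by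
    have h1 := Nat.choose_mul (n := m) (Nat.le_add_right a b)
    have h2 := Nat.choose_mul (n := m) (Nat.le_add_left b a)
    rw [Nat.add_sub_cancel_left] at h1
    rw [Nat.add_sub_cancel_right] at h2
    rw [← h1, ← h2, Nat.choose_symm_add]
  -- positivity
  have hx : (0:ℝ) < m.choose a := by
    exact_mod_cast Nat.choose_pos (le_trans (Nat.le_add_right a b) hm)
  have hu : (0:ℝ) < m.choose b := by
    exact_mod_cast Nat.choose_pos (le_trans (Nat.le_add_left b a) hm)
  have hy : (0:ℝ) < (m - a).choose b := by
    exact_mod_cast Nat.choose_pos (Nat.le_sub_of_add_le (by omega))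
  have hv : (0:ℝ) < (m - b).choose a := by
    exact_mod_cast Nat.choose_pos (Nat.le_sub_of_add_le (by omega))
  have keyR : (A.card : ℝ) * ((m - a).choose b) + (B.card : ℝ) * ((m - b).choose a)
      ≤ (m.choose a : ℝ) * ((m - a).choose b) := by exact_mod_cast key
  have hidentR : (m.choose a : ℝ) * ((m - a).choose b)
      = (m.choose b : ℝ) * ((m - b).choose a) := by exact_mod_cast hident
  rw [div_add_div _ _ (ne_of_gt hx) (ne_of_gt hu), div_le_one (by positivity)]
  rw [← mul_le_mul_iff_of_pos_right hy]
  nlinarith [mul_le_mul_of_nonneg_left keyR hu.le, hidentR, hy.le, hv.le, hx.le, hu.le]
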